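/- Under the same assumptions, the dual function d(x) = min_{u ∈ U} [f(u) + ⟨x, g(u)⟩] is differentiable on ℝᵖ₊ with ∇d(x) = g(u(x)), and its gradient is Lipschitz continuous with constant L_d = c_g²/σ_f: ‖∇d(x) − ∇d(x̄)‖ ≤ (c_g²/σ_f)‖x − x̄‖ for all x, x̄ ∈ ℝᵖ₊. -/

import Mathlib

open scoped RealInnerProductSpace

/-- Auxiliary: `g` is `cg`-Lipschitz on `U`. -/
theorem aux_g_lip {n p : ℕ} (U : Set (EuclideanSpace ℝ (Fin n))) (hUconv : Convex ℝ U)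
    (g : EuclideanSpace ℝ (Fin n) → EuclideanSpace ℝ (Fin p))
    (Dg : EuclideanSpace ℝ (Fin n) → Fin p → EuclideanSpace ℝ (Fin n))
    (cg : ℝ)
    (hgdiff : ∀ i : Fin p, ∀ v ∈ U, HasGradientAt (fun w => g w i) (Dg v i) v)
    (hjac : ∀ u ∈ U, Real.sqrt (∑ i, ‖Dg u i‖ ^ 2) ≤ cg)
    {u v : EuclideanSpace ℝ (Fin n)} (hu : u ∈ U) (hv : v ∈ U) :
    ‖g u - g v‖ ≤ cg * ‖u - v‖ := by
  set J : EuclideanSpace ℝ (Fin n) → (EuclideanSpace ℝ (Fin n) →L[ℝ] EuclideanSpace ℝ (Fin p)) :=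
    fun w => (EuclideanSpace.equiv (Fin p) ℝ).symm.toContinuousLinearMap.comp
      (ContinuousLinearMap.pi fun i => innerSL ℝ (Dg w i)) with hJ
  have hderiv : ∀ w ∈ U, HasFDerivWithinAt g (J w) U w := by
    intro w hw
    have hpi : HasFDerivWithinAt (fun z i => g z i)
        (ContinuousLinearMap.pi fun i => innerSL ℝ (Dg w i)) U w := by
      apply hasFDerivWithinAt_pi''
      intro i
      have := ((hgdiff i w hw).hasFDerivAt).hasFDerivWithinAt (s := U)
      convert this using 1
      · ext z; simp
      · rfl
      · ext z; simp
    exact ((EuclideanSpace.equiv (Fin p) ℝ).symm.comp_hasFDerivWithinAt_iff.2 hpi)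
  have hbound : ∀ w ∈ U, ‖J w‖ ≤ cg := by
    intro w hw
    have hcg0 : 0 ≤ cg := le_trans (Real.sqrt_nonneg _) (hjac w hw)
    apply ContinuousLinearMap.opNorm_le_bound _ hcg0
    intro z
    have h1 : ‖J w z‖ = Real.sqrt (∑ i, ⟪Dg w i, z⟫ ^ 2) := by
      rw [EuclideanSpace.norm_eq]
      congr 1
      apply Finset.sum_congr rfl
      intro i _
      rw [Real.norm_eq_abs, sq_abs]
      rfl
    rw [h1]
    calc Real.sqrt (∑ i, ⟪Dg w i, z⟫ ^ 2) ≤ Real.sqrt (∑ i, ‖Dg w i‖ ^ 2 * ‖z‖ ^ 2) := by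
          apply Real.sqrt_le_sqrt
          apply Finset.sum_le_sum
          intro i _
          nlinarith [abs_real_inner_le_norm (Dg w i) z, abs_nonneg (⟪Dg w i, z⟫ : ℝ),
            sq_abs (⟪Dg w i, z⟫ : ℝ), norm_nonneg (Dg w i), norm_nonneg z]
      _ = Real.sqrt (∑ i, ‖Dg w i‖ ^ 2) * ‖z‖ := by
          rw [← Finset.sum_mul, Real.sqrt_mul (by positivity), Real.sqrt_sq (norm_nonneg _)]
      _ ≤ cg * ‖z‖ := by
          apply mul_le_mul_of_nonneg_right (hjac w hw) (norm_nonneg _)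
  exact hUconv.norm_image_sub_le_of_norm_hasFDerivWithin_le hderiv hbound hv hu

/-- Auxiliary: strong-convexity value gap at the minimizer of the Lagrangian. -/
theorem aux_gap {n p : ℕ} (U : Set (EuclideanSpace ℝ (Fin n))) (hUconv : Convex ℝ U)
    (f : EuclideanSpace ℝ (Fin n) → ℝ)
    (gradf : EuclideanSpace ℝ (Fin n) → EuclideanSpace ℝ (Fin n))
    (g : EuclideanSpace ℝ (Fin n) → EuclideanSpace ℝ (Fin p))
    (Dg : EuclideanSpace ℝ (Fin n) → Fin p → EuclideanSpace ℝ (Fin n))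
    (σf : ℝ)
    (hstrconv : ∀ u ∈ U, ∀ v ∈ U,
      f v + ⟪gradf v, u - v⟫ + σf / 2 * ‖u - v‖ ^ 2 ≤ f u)
    (hgconv : ∀ i : Fin p, ∀ u ∈ U, ∀ v ∈ U,
      g v i + ⟪Dg v i, u - v⟫ ≤ g u i)
    (x : EuclideanSpace ℝ (Fin p)) (hx : ∀ i, 0 ≤ x i)
    (u v : EuclideanSpace ℝ (Fin n)) (hu : u ∈ U) (hv : v ∈ U)
    (humin : ∀ w ∈ U, f u + ∑ i, x i * g u i ≤ f w + ∑ i, x i * g w i) :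
    f u + ∑ i, x i * g u i + σf / 2 * ‖v - u‖ ^ 2 ≤ f v + ∑ i, x i * g v i := by
  set W : ℝ := ‖v - u‖ ^ 2 with hW
  have key : ∀ t : ℝ, 0 < t → t ≤ 1 →
      σf / 2 * (1 - t) * W ≤ (f v + ∑ i, x i * g v i) - (f u + ∑ i, x i * g u i) := by
    intro t ht0 ht1
    set ut : EuclideanSpace ℝ (Fin n) := u + t • (v - u) with hut
    have hutU : ut ∈ U := by
      have h := hUconv hu hv (by linarith : (0:ℝ) ≤ 1 - t) (le_of_lt ht0) (by ring)
      convert h using 1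
      rw [hut]
      module
    have heu : u - ut = (-t) • (v - u) := by rw [hut]; module
    have hev : v - ut = (1 - t) • (v - u) := by rw [hut]; module
    set A : ℝ := ⟪gradf ut, v - u⟫ with hA
    set S : ℝ := ∑ i, x i * ⟪Dg ut i, v - u⟫ with hS
    have h1 : f ut + (-t) * A + σf / 2 * t ^ 2 * W ≤ f u := by
      have := hstrconv u hu ut hutU
      rw [heu, real_inner_smul_right, norm_smul, mul_pow, Real.norm_eq_abs, sq_abs,
        ← hW, ← hA] at this
      linarith [this]
    have h2 : f ut + (1 - t) * A + σf / 2 * (1 - t) ^ 2 * W ≤ f v := by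
      have := hstrconv v hv ut hutU
      rw [hev, real_inner_smul_right, norm_smul, mul_pow, Real.norm_eq_abs, sq_abs,
        ← hW, ← hA] at this
      linarith [this]
    have h3 : (∑ i, x i * g ut i) + (-t) * S ≤ ∑ i, x i * g u i := by
      rw [hS, Finset.mul_sum, ← Finset.sum_add_distrib]
      apply Finset.sum_le_sum
      intro i _
      have := hgconv i u hu ut hutU
      rw [heu, real_inner_smul_right] at this
      have hxi := hx i
      nlinarith [this]
    have h4 : (∑ i, x i * g ut i) + (1 - t) * S ≤ ∑ i, x i * g v i := by
      rw [hS, Finset.mul_sum, ← Finset.sum_add_distrib]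
      apply Finset.sum_le_sum
      intro i _
      have := hgconv i v hv ut hutU
      rw [hev, real_inner_smul_right] at this
      have hxi := hx i
      nlinarith [this]
    have h5 := humin ut hutU
    have hWnn : 0 ≤ W := by positivity
    nlinarith [mul_le_mul_of_nonneg_left (add_le_add h1 h3) (by linarith : (0:ℝ) ≤ 1 - t),
      mul_le_mul_of_nonneg_left (add_le_add h2 h4) (le_of_lt ht0)]
  have hWnn : 0 ≤ W := by positivity
  have hlim : Filter.Tendsto (fun t : ℝ => σf / 2 * (1 - t) * W) (nhdsWithin 0 (Set.Ioi 0))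
      (nhds (σf / 2 * W)) := by
    have hc : Continuous (fun t : ℝ => σf / 2 * (1 - t) * W) :=
      (continuous_const.mul (continuous_const.sub continuous_id)).mul continuous_const
    have h0 := (hc.tendsto 0).mono_left (nhdsWithin_le_nhds (s := Set.Ioi (0:ℝ)))
    simpa using h0
  have hev : ∀ᶠ t in nhdsWithin (0:ℝ) (Set.Ioi 0),
      σf / 2 * (1 - t) * W ≤ (f v + ∑ i, x i * g v i) - (f u + ∑ i, x i * g u i) := by
    filter_upwards [Ioc_mem_nhdsGT_of_mem (Set.mem_Ico.2 ⟨le_refl 0, one_pos⟩)] with t ht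
    exact key t ht.1 ht.2
  have := le_of_tendsto hlim hev
  linarith

/-- the dual function `d(x) = min_{u ∈ U} [f(u) + ⟨x, g(u)⟩]` is
differentiable on the nonnegative orthant with `∇d(x) = g(u(x))`, and this
gradient is Lipschitz with constant `L_d = c_g² / σ_f`. -/
theorem dual_function_gradient_lipschitz {n p : ℕ}
    (U : Set (EuclideanSpace ℝ (Fin n)))
    (hUconv : Convex ℝ U) (hUclosed : IsClosed U)
    (f : EuclideanSpace ℝ (Fin n) → ℝ)
    (gradf : EuclideanSpace ℝ (Fin n) → EuclideanSpace ℝ (Fin n))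
    (g : EuclideanSpace ℝ (Fin n) → EuclideanSpace ℝ (Fin p))
    (Dg : EuclideanSpace ℝ (Fin n) → Fin p → EuclideanSpace ℝ (Fin n))
    (σf cg : ℝ) (hσf : 0 < σf) (hcg : 0 < cg)
    (hfdiff : ∀ v ∈ U, HasGradientAt f (gradf v) v)
    (hstrconv : ∀ u ∈ U, ∀ v ∈ U,
      f v + ⟪gradf v, u - v⟫ + σf / 2 * ‖u - v‖ ^ 2 ≤ f u)
    (hgdiff : ∀ i : Fin p, ∀ v ∈ U, HasGradientAt (fun w => g w i) (Dg v i) v)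
    (hgconv : ∀ i : Fin p, ∀ u ∈ U, ∀ v ∈ U,
      g v i + ⟪Dg v i, u - v⟫ ≤ g u i)
    (hjac : ∀ u ∈ U, Real.sqrt (∑ i, ‖Dg u i‖ ^ 2) ≤ cg)
    -- ux x is the unique minimizer of the Lagrangian L(·, x) over U
    (ux : EuclideanSpace ℝ (Fin p) → EuclideanSpace ℝ (Fin n))
    (hmem : ∀ x : EuclideanSpace ℝ (Fin p), (∀ i, 0 ≤ x i) → ux x ∈ U)
    (hmin : ∀ x : EuclideanSpace ℝ (Fin p), (∀ i, 0 ≤ x i) → ∀ u ∈ U,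
      f (ux x) + ∑ i, x i * g (ux x) i ≤ f u + ∑ i, x i * g u i)
    -- d is the dual function
    (d : EuclideanSpace ℝ (Fin p) → ℝ)
    (hd : ∀ x : EuclideanSpace ℝ (Fin p), (∀ i, 0 ≤ x i) →
      d x = f (ux x) + ∑ i, x i * g (ux x) i) :
    (∀ x : EuclideanSpace ℝ (Fin p), (∀ i, 0 ≤ x i) →
      HasGradientWithinAt d (g (ux x)) {y : EuclideanSpace ℝ (Fin p) | ∀ i, 0 ≤ y i} x) ∧
    (∀ x xbar : EuclideanSpace ℝ (Fin p), (∀ i, 0 ≤ x i) → (∀ i, 0 ≤ xbar i) →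
      ‖g (ux x) - g (ux xbar)‖ ≤ cg ^ 2 / σf * ‖x - xbar‖) := by
  have part2 : ∀ x xbar : EuclideanSpace ℝ (Fin p), (∀ i, 0 ≤ x i) → (∀ i, 0 ≤ xbar i) →
      ‖g (ux x) - g (ux xbar)‖ ≤ cg ^ 2 / σf * ‖x - xbar‖ := by
    intro x xbar hx hxbar
    have hu := hmem x hx
    have hub := hmem xbar hxbar
    have h1 := aux_gap U hUconv f gradf g Dg σf hstrconv hgconv x hx (ux x) (ux xbar)
      hu hub (hmin x hx)
    have h2 := aux_gap U hUconv f gradf g Dg σf hstrconv hgconv xbar hxbar (ux xbar) (ux x)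
      hub hu (hmin xbar hxbar)
    rw [show ‖ux xbar - ux x‖ = ‖ux x - ux xbar‖ from norm_sub_rev _ _] at h1
    have hsum : ∑ i, (x i - xbar i) * (g (ux xbar) i - g (ux x) i)
        = ((∑ i, x i * g (ux xbar) i) + ∑ i, xbar i * g (ux x) i)
          - ((∑ i, x i * g (ux x) i) + ∑ i, xbar i * g (ux xbar) i) := by
      rw [← Finset.sum_add_distrib, ← Finset.sum_add_distrib, ← Finset.sum_sub_distrib]
      apply Finset.sum_congr rfl
      intro i _
      ring
    have mono : σf * ‖ux x - ux xbar‖ ^ 2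
        ≤ ∑ i, (x i - xbar i) * (g (ux xbar) i - g (ux x) i) := by
      rw [hsum]; linarith
    have cauchy : ∑ i, (x i - xbar i) * (g (ux xbar) i - g (ux x) i)
        ≤ ‖x - xbar‖ * ‖g (ux xbar) - g (ux x)‖ := by
      have e : ⟪x - xbar, g (ux xbar) - g (ux x)⟫
          = ∑ i, (x i - xbar i) * (g (ux xbar) i - g (ux x) i) := by
        simp [PiLp.inner_apply, PiLp.sub_apply]
        exact Finset.sum_congr rfl fun i _ => mul_comm _ _
      rw [← e]
      exact real_inner_le_norm _ _
    have hgl : ‖g (ux x) - g (ux xbar)‖ ≤ cg * ‖ux x - ux xbar‖ :=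
      aux_g_lip U hUconv g Dg cg hgdiff hjac hu hub
    rw [show ‖g (ux xbar) - g (ux x)‖ = ‖g (ux x) - g (ux xbar)‖ from norm_sub_rev _ _] at cauchy
    set N : ℝ := ‖g (ux x) - g (ux xbar)‖ with hN
    have hNnn : 0 ≤ N := norm_nonneg _
    have key1 : σf * ‖ux x - ux xbar‖ ^ 2 ≤ ‖x - xbar‖ * N := le_trans mono cauchy
    have hN2 : N ^ 2 ≤ cg ^ 2 * ‖ux x - ux xbar‖ ^ 2 := by
      nlinarith [hgl, norm_nonneg (ux x - ux xbar), hcg.le]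
    have hmain : σf * N ^ 2 ≤ cg ^ 2 * (‖x - xbar‖ * N) := by
      nlinarith [mul_le_mul_of_nonneg_left hN2 hσf.le,
        mul_le_mul_of_nonneg_left key1 (sq_nonneg cg)]
    rw [div_mul_eq_mul_div, le_div_iff₀ hσf]
    rcases eq_or_lt_of_le hNnn with h | h
    · rw [← h, zero_mul]
      positivity
    · nlinarith [hmain, h]
  refine ⟨?_, part2⟩
  intro x hx
  rw [hasGradientWithinAt_iff_isLittleO]
  set C : ℝ := cg ^ 2 / σf with hC
  have hCpos : 0 < C := by positivity
  have hbound : ∀ y : EuclideanSpace ℝ (Fin p), (∀ i, 0 ≤ y i) →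
      |d y - d x - ⟪g (ux x), y - x⟫| ≤ C * ‖y - x‖ ^ 2 := by
    intro y hy
    have hinner : ⟪g (ux x), y - x⟫ = ∑ i, g (ux x) i * (y i - x i) := by
      simp [PiLp.inner_apply, PiLp.sub_apply]
      exact Finset.sum_congr rfl fun i _ => mul_comm _ _
    have hup : d y - d x - ⟪g (ux x), y - x⟫ ≤ 0 := by
      have h1 := hmin y hy (ux x) (hmem x hx)
      rw [hd y hy, hd x hx, hinner]
      have hsum : ∑ i, g (ux x) i * (y i - x i)
          = (∑ i, y i * g (ux x) i) - ∑ i, x i * g (ux x) i := by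
        rw [← Finset.sum_sub_distrib]
        apply Finset.sum_congr rfl
        intro i _
        ring
      rw [hsum]
      linarith
    have hlo : -(C * ‖y - x‖ ^ 2) ≤ d y - d x - ⟪g (ux x), y - x⟫ := by
      have h1 := hmin x hx (ux y) (hmem y hy)
      have hiy : ⟪y - x, g (ux y) - g (ux x)⟫
          = ∑ i, (y i - x i) * (g (ux y) i - g (ux x) i) := by
        simp [PiLp.inner_apply, PiLp.sub_apply]
        exact Finset.sum_congr rfl fun i _ => mul_comm _ _
      have hcs : -(‖y - x‖ * ‖g (ux y) - g (ux x)‖) ≤ ⟪y - x, g (ux y) - g (ux x)⟫ :=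
        neg_le_of_neg_le (by
          have := abs_real_inner_le_norm (y - x) (g (ux y) - g (ux x))
          have h2 := neg_abs_le (⟪y - x, g (ux y) - g (ux x)⟫ : ℝ)
          linarith)
      have hnormbd : ‖g (ux y) - g (ux x)‖ ≤ C * ‖y - x‖ := part2 y x hy hx
      rw [hd y hy, hd x hx, hinner]
      have e1 : ∑ i, (y i - x i) * (g (ux y) i - g (ux x) i)
          = (∑ i, y i * g (ux y) i) - (∑ i, x i * g (ux y) i)
            - ∑ i, g (ux x) i * (y i - x i) := by
        rw [← Finset.sum_sub_distrib, ← Finset.sum_sub_distrib]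
        apply Finset.sum_congr rfl
        intro i _
        ring
      have step : ∑ i, (y i - x i) * (g (ux y) i - g (ux x) i)
          ≤ (f (ux y) + ∑ i, y i * g (ux y) i) - (f (ux x) + ∑ i, x i * g (ux x) i)
            - ∑ i, g (ux x) i * (y i - x i) := by
        rw [e1]
        linarith
      have step2 : -(‖y - x‖ * ‖g (ux y) - g (ux x)‖)
          ≤ ∑ i, (y i - x i) * (g (ux y) i - g (ux x) i) := by
        rw [← hiy]; exact hcs
      have step3 : -(C * ‖y - x‖ ^ 2) ≤ -(‖y - x‖ * ‖g (ux y) - g (ux x)‖) := by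
        nlinarith [norm_nonneg (y - x), hnormbd]
      linarith
    rw [abs_le]
    constructor
    · linarith
    · have : (0:ℝ) ≤ C * ‖y - x‖ ^ 2 := by positivity
      linarith
  rw [Asymptotics.isLittleO_iff]
  intro c hc
  have hball : Metric.closedBall x (c / C)
      ∈ nhdsWithin x {y : EuclideanSpace ℝ (Fin p) | ∀ i, 0 ≤ y i} :=
    mem_nhdsWithin_of_mem_nhds (Metric.closedBall_mem_nhds x (by positivity))
  filter_upwards [hball, self_mem_nhdsWithin] with y hy1 hy2
  have hb := hbound y hy2
  have hd1 : ‖y - x‖ ≤ c / C := by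
    rw [← dist_eq_norm]
    exact Metric.mem_closedBall.1 hy1
  calc ‖d y - d x - ⟪g (ux x), y - x⟫‖ ≤ C * ‖y - x‖ ^ 2 := by
        rw [Real.norm_eq_abs]; exact hb
    _ ≤ c * ‖y - x‖ := by
        have h2 : C * ‖y - x‖ ≤ c := by
          rw [← le_div_iff₀' hCpos]
          exact hd1
        nlinarith [norm_nonneg (y - x), h2, hCpos]
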